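/- Let S be a commutative ring, A ∈ Mₘ(S), and suppose Aⁿ = Aⁿ⁺¹B for some positive integer n and B ∈ Mₘ(S). Then there exists Y ∈ Mₘ(S) with Aⁿ = YAⁿ⁺¹. -/

import Mathlib

open Polynomial Matrix

/-- Călugăreanu–Pop conjecture (generalized): over a commutative ring `S`,
if `A^n = A^(n+1) * B` for matrices, then `A^n = Y * A^(n+1)` for some `Y`. -/
theorem stmt_10 {S : Type*} [CommRing S] {m : ℕ}
    (A B : Matrix (Fin m) (Fin m) S) (n : ℕ) (hn : 0 < n)
    (h : A ^ n = A ^ (n + 1) * B) :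
    ∃ Y : Matrix (Fin m) (Fin m) S, A ^ n = Y * A ^ (n + 1) := by
  classical
  have hA1 : A * A ^ n = A ^ (n + 1) := (pow_succ' A n).symm
  -- the relation matrix over S[X]
  set D : Matrix (Fin m) (Fin m) S[X] :=
    1 - (X : S[X]) • (B.transpose.map Polynomial.C) with hD
  -- det D = 1 - X * q
  have hconst : (D.det).coeff 0 = 1 := by
    have h0 : D.map (evalRingHom (0 : S)) = 1 := by
      ext i j
      simp [hD, Matrix.one_apply, Matrix.sub_apply, Matrix.smul_apply]
      split <;> simp
    have h1 := (evalRingHom (0 : S)).map_det D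
    rw [RingHom.mapMatrix_apply, h0, Matrix.det_one] at h1
    rwa [Polynomial.coeff_zero_eq_eval_zero]
  obtain ⟨q, hq⟩ : (X : S[X]) ∣ (1 - D.det) := by
    rw [Polynomial.X_dvd_iff]
    simp [hconst]
  have hdet : D.det = 1 - X * q := by linear_combination -hq
  -- the ring hom substituting A for X, applied entrywise
  set Φ : Matrix (Fin m) (Fin m) S[X] →+* Matrix (Fin m) (Fin m) (Matrix (Fin m) (Fin m) S) :=
    ((Polynomial.aeval A).toRingHom : S[X] →+* Matrix (Fin m) (Fin m) S).mapMatrix with hΦ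
  -- the gadget matrix of columns of A^n
  set G : Matrix (Fin m) (Fin m) (Matrix (Fin m) (Fin m) S) :=
    Matrix.of (fun i j => A ^ n * Matrix.single i j (1 : S)) with hG
  -- key: Φ D * G = 0
  have hDG : Φ D * G = 0 := by
    ext k j : 2
    rw [Matrix.mul_apply, Matrix.zero_apply]
    have hterm : ∀ i, (Φ D) k i * G i j
        = (if k = i then A ^ n * Matrix.single i j (1 : S) else 0)
          - B i k • (A ^ (n+1) * Matrix.single i j (1 : S)) := by
      intro i
      have hent : (Φ D) k i = (if k = i then (1 : Matrix (Fin m) (Fin m) S) else 0) - B i k • A := by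
        simp only [hΦ, RingHom.mapMatrix_apply, Matrix.map_apply, hD, Matrix.sub_apply,
          Matrix.smul_apply, Matrix.one_apply, Matrix.transpose_apply]
        rw [_root_.map_sub]
        congr 1
        · split <;> simp
        · show (Polynomial.aeval A) (X * (B.transpose.map Polynomial.C) k i) = B i k • A
          simp only [Matrix.map_apply, Matrix.transpose_apply]
          rw [_root_.map_mul, Polynomial.aeval_X, Polynomial.aeval_C]
          rw [← Algebra.commutes, ← Algebra.smul_def]
      rw [hent]
      simp only [hG, Matrix.of_apply]
      rw [sub_mul, smul_mul_assoc, ← mul_assoc A (A ^ n), hA1]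
      congr 1
      split <;> simp
    rw [Finset.sum_congr rfl (fun i _ => hterm i), Finset.sum_sub_distrib]
    rw [Finset.sum_ite_eq Finset.univ k (fun i => A ^ n * Matrix.single i j (1 : S))]
    simp only [Finset.mem_univ, if_true]
    have hsum : ∑ i, B i k • (A ^ (n+1) * Matrix.single i j (1 : S))
        = A ^ (n+1) * (B * Matrix.single k j (1 : S)) := by
      have hs : ∑ i, B i k • Matrix.single i j (1 : S) = B * Matrix.single k j (1 : S) := by
        ext r c
        simp [Matrix.mul_apply, Matrix.sum_apply, Matrix.single, Finset.sum_ite_eq,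
          mul_ite, ite_and]
      rw [← hs, Finset.mul_sum]
      congr 1
      ext i
      rw [mul_smul_comm]
    rw [hsum, ← mul_assoc, ← h, sub_self]
  -- now multiply the adjugate identity by G
  have hadj : Φ (D.det • 1) * G = 0 := by
    have h2 : Φ (adjugate D * D) = Φ (D.det • 1) := by rw [Matrix.adjugate_mul]
    rw [← h2, _root_.map_mul, mul_assoc, hDG, mul_zero]
  -- extract: aeval A D.det * (A^n * E k j) = 0
  have hext : ∀ k j : Fin m, (Polynomial.aeval A) D.det * (A ^ n * Matrix.single k j (1 : S)) = 0 := by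
    intro k j
    have h3 : (Φ (D.det • 1) * G) k j = (0 : Matrix (Fin m) (Fin m) (Matrix (Fin m) (Fin m) S)) k j := by
      rw [hadj]
    rw [Matrix.mul_apply, Matrix.zero_apply] at h3
    rw [← h3]
    rw [Finset.sum_congr rfl (fun i _ => by
      show Φ (D.det • 1) k i * G i j =
        (if k = i then (Polynomial.aeval A) D.det * (A ^ n * Matrix.single i j (1:S)) else 0)
      have h4 : Φ (D.det • 1) k i = if k = i then (Polynomial.aeval A) D.det else 0 := by
        simp only [hΦ, RingHom.mapMatrix_apply, Matrix.map_apply, Matrix.smul_apply,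
          Matrix.one_apply, smul_eq_mul, mul_ite, mul_one, mul_zero]
        split <;> simp
      rw [h4]
      split <;> simp [hG])]
    rw [Finset.sum_ite_eq Finset.univ k
      (fun i => (Polynomial.aeval A) D.det * (A ^ n * Matrix.single i j (1:S)))]
    simp
  have hzero : (Polynomial.aeval A) D.det * A ^ n = 0 := by
    have hsum1 : ∑ j : Fin m, Matrix.single j j (1 : S) = (1 : Matrix (Fin m) (Fin m) S) := by
      ext r c
      by_cases hrc : r = c
      · subst hrc
        simp [Matrix.single, Matrix.sum_apply, Matrix.one_apply, Finset.sum_ite_eq, and_comm]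
      · simp [Matrix.single, Matrix.sum_apply, Matrix.one_apply, hrc]
        have he : Finset.filter (fun x => x = r ∧ x = c) Finset.univ = (∅ : Finset (Fin m)) := by
          rw [Finset.filter_eq_empty_iff]
          rintro x - ⟨rfl, rfl⟩
          exact hrc rfl
        rw [he]
        simp
    calc (Polynomial.aeval A) D.det * A ^ n
        = (Polynomial.aeval A) D.det * (A ^ n * ∑ j : Fin m, Matrix.single j j (1 : S)) := by
          rw [hsum1, mul_one]
      _ = ∑ j : Fin m, (Polynomial.aeval A) D.det * (A ^ n * Matrix.single j j (1 : S)) := by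
          rw [Finset.mul_sum, Finset.mul_sum]
      _ = 0 := by
          rw [Finset.sum_congr rfl (fun j _ => hext j j)]
          simp
  -- conclude
  refine ⟨(Polynomial.aeval A) q, ?_⟩
  have hAq : (Polynomial.aeval A) D.det = 1 - A * (Polynomial.aeval A) q := by
    rw [hdet, _root_.map_sub, _root_.map_one, _root_.map_mul, Polynomial.aeval_X]
  rw [hAq, sub_mul, one_mul, sub_eq_zero] at hzero
  have hc : A * (Polynomial.aeval A) q = (Polynomial.aeval A) q * A := by
    have h5 := congrArg (Polynomial.aeval A) (mul_comm (X : S[X]) q)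
    simpa [_root_.map_mul] using h5
  calc A ^ n = A * (Polynomial.aeval A) q * A ^ n := hzero
    _ = (Polynomial.aeval A) q * A ^ (n+1) := by
        rw [hc, mul_assoc, hA1]
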